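/- For the exponential distribution with mean θ₂, I(F_{Y_{[r:n]}}, F_Y) = (π²/6 − 1)θ₂ + (αθ₂/4)·(n−2r+1)/(n+1). In particular CE(Y) = (π²/6 − 1)θ₂ and −∫₀^∞ F²(y) log F(y) dy = (π²/6 − 5/4)θ₂. -/

import Mathlib

open MeasureTheory Real Set Filter Topology

namespace Stmt15Aux

lemma integrableOn_exp_pow {θ : ℝ} (hθ : 0 < θ) (j : ℕ) (hj : 0 < j) :
    IntegrableOn (fun y : ℝ => exp (-y / θ) ^ j) (Ioi 0) := by
  have hb : 0 < (j : ℝ) / θ := by positivity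
  refine (exp_neg_integrableOn_Ioi 0 hb).congr_fun (fun y _ => ?_) measurableSet_Ioi
  rw [← Real.exp_nat_mul]
  ring_nf

lemma integral_exp_pow {θ : ℝ} (hθ : 0 < θ) (j : ℕ) (hj : 0 < j) :
    ∫ y in Ioi (0:ℝ), exp (-y / θ) ^ j = θ / j := by
  have hb : 0 < (j:ℝ)/θ := by positivity
  have h1 : ∀ y : ℝ, exp (-y/θ) ^ j = exp (-((j:ℝ)/θ * y)) := fun y => by
    rw [← Real.exp_nat_mul]; ring_nf
  have hjr : (0:ℝ) < j := by exact_mod_cast hj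
  calc ∫ y in Ioi (0:ℝ), exp (-y/θ)^j = ∫ y in Ioi (0:ℝ), exp (-((j:ℝ)/θ * y)) := by
        simp_rw [h1]
    _ = ((j:ℝ)/θ)⁻¹ • ∫ x in Ioi ((j:ℝ)/θ * 0), exp (-x) :=
        integral_comp_mul_left_Ioi (fun x => exp (-x)) 0 hb
    _ = θ / j := by
        rw [mul_zero, integral_exp_neg_Ioi]
        simp [smul_eq_mul, inv_div]

lemma glue {g : ℕ → ℝ → ℝ} {h : ℝ → ℝ} {a : ℕ → ℝ} {c : ℝ}
    (hgm : ∀ k, IntegrableOn (g k) (Ioi 0))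
    (hg0 : ∀ k, ∀ y ∈ Ioi (0:ℝ), 0 ≤ g k y)
    (hgi : ∀ k, ∫ y in Ioi (0:ℝ), g k y = a k)
    (hsum : ∀ y ∈ Ioi (0:ℝ), HasSum (fun k => g k y) (h y))
    (hmeas : AEStronglyMeasurable h (volume.restrict (Ioi 0)))
    (ha : HasSum a c) :
    IntegrableOn h (Ioi (0:ℝ)) ∧ ∫ y in Ioi (0:ℝ), h y = c := by
  have ha0 : ∀ k, 0 ≤ a k := fun k =>
    (hgi k) ▸ setIntegral_nonneg measurableSet_Ioi (hg0 k)
  have hc0 : 0 ≤ c := ha.nonneg ha0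
  have hh0 : 0 ≤ᵐ[volume.restrict (Ioi (0:ℝ))] h := by
    filter_upwards [ae_restrict_mem measurableSet_Ioi] with y hy
    exact (hsum y hy).nonneg fun k => hg0 k y hy
  have hg0' : ∀ k, 0 ≤ᵐ[volume.restrict (Ioi (0:ℝ))] g k := fun k => by
    filter_upwards [ae_restrict_mem measurableSet_Ioi] with y hy
    exact hg0 k y hy
  have hlin : ∫⁻ y in Ioi (0:ℝ), ENNReal.ofReal (h y) = ENNReal.ofReal c := by
    have h1 : ∫⁻ y in Ioi (0:ℝ), ENNReal.ofReal (h y)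
        = ∫⁻ y in Ioi (0:ℝ), ∑' k, ENNReal.ofReal (g k y) := by
      refine lintegral_congr_ae ?_
      filter_upwards [ae_restrict_mem measurableSet_Ioi] with y hy
      rw [← (hsum y hy).tsum_eq,
        ENNReal.ofReal_tsum_of_nonneg (fun k => hg0 k y hy) (hsum y hy).summable]
    rw [h1, lintegral_tsum (fun k =>
      ((hgm k).aemeasurable.ennreal_ofReal))]
    have h2 : ∀ k, ∫⁻ y in Ioi (0:ℝ), ENNReal.ofReal (g k y) = ENNReal.ofReal (a k) := by
      intro k
      rw [← ofReal_integral_eq_lintegral_ofReal (hgm k) (hg0' k), hgi k]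
    simp_rw [h2]
    rw [← ENNReal.ofReal_tsum_of_nonneg ha0 ha.summable, ha.tsum_eq]
  have hint : IntegrableOn h (Ioi (0:ℝ)) :=
    ⟨hmeas, (hasFiniteIntegral_iff_ofReal hh0).2 (by rw [hlin]; exact ENNReal.ofReal_lt_top)⟩
  refine ⟨hint, ?_⟩
  rw [integral_eq_lintegral_of_nonneg_ae hh0 hmeas, hlin, ENNReal.toReal_ofReal hc0]

lemma S0 : HasSum (fun k : ℕ => 1 / ((k:ℝ)+1)^2) (π^2/6) := by
  have h0 := (hasSum_nat_add_iff' (f := fun n : ℕ => (1:ℝ)/(n:ℝ)^2) 1).2 hasSum_zeta_two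
  have h1 : (π^2/6 : ℝ) - ∑ i ∈ Finset.range 1, (1:ℝ)/(i:ℝ)^2 = π^2/6 := by
    simp
  rw [h1] at h0
  convert h0 using 2 with k
  · rfl
  push_cast
  ring

lemma tendsto_aux (b : ℝ) (hb : 0 < b) :
    Tendsto (fun n : ℕ => 1/((n:ℝ)+b)) atTop (𝓝 0) := by
  have h := tendsto_atTop_add_const_right atTop b
    (tendsto_natCast_atTop_atTop (R := ℝ))
  simpa [one_div, Pi.inv_def] using h.inv_tendsto_atTop

lemma S1 : HasSum (fun k : ℕ => 1/(((k:ℝ)+1)*((k:ℝ)+2))) 1 := by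
  rw [hasSum_iff_tendsto_nat_of_nonneg (fun k => by positivity)]
  have key : ∀ n : ℕ, ∑ i ∈ Finset.range n, 1/(((i:ℝ)+1)*((i:ℝ)+2)) = 1 - 1/((n:ℝ)+1) := by
    intro n
    induction n with
    | zero => simp
    | succ n ih =>
      rw [Finset.sum_range_succ, ih]
      have h1 : ((n:ℝ)+1) ≠ 0 := by positivity
      have h2 : ((n:ℝ)+2) ≠ 0 := by positivity
      push_cast
      field_simp
      ring
  simp_rw [key]
  have h : Tendsto (fun n : ℕ => 1 - 1/((n:ℝ)+1)) atTop (𝓝 (1 - 0)) :=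
    tendsto_const_nhds.sub (tendsto_aux 1 one_pos)
  simpa using h

lemma S2 : HasSum (fun k : ℕ => 1/(((k:ℝ)+1)*((k:ℝ)+3))) (3/4) := by
  rw [hasSum_iff_tendsto_nat_of_nonneg (fun k => by positivity)]
  have key : ∀ n : ℕ, ∑ i ∈ Finset.range n, 1/(((i:ℝ)+1)*((i:ℝ)+3))
      = 3/4 - (1/2)*(1/((n:ℝ)+1)) - (1/2)*(1/((n:ℝ)+2)) := by
    intro n
    induction n with
    | zero => norm_num
    | succ n ih =>
      rw [Finset.sum_range_succ, ih]
      have h1 : ((n:ℝ)+1) ≠ 0 := by positivity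
      have h2 : ((n:ℝ)+2) ≠ 0 := by positivity
      have h3 : ((n:ℝ)+3) ≠ 0 := by positivity
      push_cast
      field_simp
      ring
  simp_rw [key]
  have h : Tendsto (fun n : ℕ => 3/4 - (1/2)*(1/((n:ℝ)+1)) - (1/2)*(1/((n:ℝ)+2)))
      atTop (𝓝 (3/4 - (1/2)*0 - (1/2)*0)) :=
    (tendsto_const_nhds.sub ((tendsto_aux 1 one_pos).const_mul _)).sub
      ((tendsto_aux 2 two_pos).const_mul _)
  simpa using h

section Key

variable {θ : ℝ}

lemma u_pos (θ : ℝ) (y : ℝ) : 0 < exp (-y/θ) := exp_pos _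

lemma u_lt_one (hθ : 0 < θ) {y : ℝ} (hy : y ∈ Ioi (0:ℝ)) : exp (-y/θ) < 1 := by
  apply exp_lt_one_iff.2
  have h0 : (0:ℝ) < y := hy
  have : 0 < y / θ := by positivity
  rw [neg_div]
  linarith

lemma key1 (hθ : 0 < θ) :
    IntegrableOn (fun y : ℝ => -((1 - exp (-y/θ)) * log (1 - exp (-y/θ)))) (Ioi 0) ∧
    ∫ y in Ioi (0:ℝ), -((1 - exp (-y/θ)) * log (1 - exp (-y/θ))) = (π^2/6 - 1) * θ := by
  have hmain := glue
    (g := fun (k : ℕ) (y : ℝ) => (1 - exp (-y/θ)) * (exp (-y/θ) ^ (k+1) / ((k:ℝ)+1)))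
    (h := fun y : ℝ => -((1 - exp (-y/θ)) * log (1 - exp (-y/θ))))
    (a := fun k : ℕ => θ * (1/(((k:ℝ)+1)^2)) - θ * (1/(((k:ℝ)+1)*((k:ℝ)+2))))
    (c := θ * (π^2/6) - θ * 1)
    ?_ ?_ ?_ ?_ ?_ ?_
  · refine ⟨hmain.1, ?_⟩
    rw [hmain.2]; ring
  · -- integrability of each g k
    intro k
    have h1 := integrableOn_exp_pow hθ (k+1) (Nat.succ_pos k)
    have h2 := integrableOn_exp_pow hθ (k+2) (by omega)
    have hI : IntegrableOn
        (fun y : ℝ => (exp (-y/θ) ^ (k+1) - exp (-y/θ) ^ (k+2)) / ((k:ℝ)+1)) (Ioi 0) :=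
      (h1.sub h2).div_const _
    exact hI.congr_fun (fun y _ => by ring) measurableSet_Ioi
  · -- nonneg
    intro k y hy
    have h1 := (u_lt_one hθ hy).le
    have h2 := (u_pos θ y).le
    have h3 : (0:ℝ) < (k:ℝ)+1 := by positivity
    have : 0 ≤ 1 - exp (-y/θ) := by linarith
    positivity
  · -- integral of each g k
    intro k
    have h1 := integrableOn_exp_pow hθ (k+1) (Nat.succ_pos k)
    have h2 := integrableOn_exp_pow hθ (k+2) (by omega)
    have heq : ∀ y ∈ Ioi (0:ℝ),
        (1 - exp (-y/θ)) * (exp (-y/θ) ^ (k+1) / ((k:ℝ)+1))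
          = (exp (-y/θ) ^ (k+1) - exp (-y/θ) ^ (k+2)) / ((k:ℝ)+1) := fun y _ => by ring
    rw [setIntegral_congr_fun measurableSet_Ioi heq]
    rw [integral_div, integral_sub h1 h2, integral_exp_pow hθ (k+1) (Nat.succ_pos k),
      integral_exp_pow hθ (k+2) (by omega)]
    have hk1 : ((k:ℝ)+1) ≠ 0 := by positivity
    have hk2 : ((k:ℝ)+2) ≠ 0 := by positivity
    push_cast
    field_simp
  · -- pointwise HasSum
    intro y hy
    have hu1 : |exp (-y/θ)| < 1 := by
      rw [abs_of_pos (u_pos θ y)]; exact u_lt_one hθ hy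
    have h := (hasSum_pow_div_log_of_abs_lt_one hu1).mul_left (1 - exp (-y/θ))
    convert h using 1
    · rfl
    ring
  · -- measurability
    apply Measurable.aestronglyMeasurable
    have hu : Measurable fun y : ℝ => 1 - exp (-y/θ) :=
      measurable_const.sub ((measurable_id.neg.div_const θ).exp)
    exact (hu.mul (Real.measurable_log.comp hu)).neg
  · -- HasSum a c
    exact (S0.mul_left θ).sub (S1.mul_left θ)

lemma key2 (hθ : 0 < θ) :
    IntegrableOn (fun y : ℝ => -((1 - exp (-y/θ))^2 * log (1 - exp (-y/θ)))) (Ioi 0) ∧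
    ∫ y in Ioi (0:ℝ), -((1 - exp (-y/θ))^2 * log (1 - exp (-y/θ))) = (π^2/6 - 5/4) * θ := by
  have hmain := glue
    (g := fun (k : ℕ) (y : ℝ) => (1 - exp (-y/θ))^2 * (exp (-y/θ) ^ (k+1) / ((k:ℝ)+1)))
    (h := fun y : ℝ => -((1 - exp (-y/θ))^2 * log (1 - exp (-y/θ))))
    (a := fun k : ℕ => θ * (1/(((k:ℝ)+1)^2)) - (2*θ) * (1/(((k:ℝ)+1)*((k:ℝ)+2)))
      + θ * (1/(((k:ℝ)+1)*((k:ℝ)+3))))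
    (c := θ * (π^2/6) - (2*θ) * 1 + θ * (3/4))
    ?_ ?_ ?_ ?_ ?_ ?_
  · refine ⟨hmain.1, ?_⟩
    rw [hmain.2]; ring
  · intro k
    have h1 := integrableOn_exp_pow hθ (k+1) (Nat.succ_pos k)
    have h2 := integrableOn_exp_pow hθ (k+2) (by omega)
    have h3 := integrableOn_exp_pow hθ (k+3) (by omega)
    have hA : IntegrableOn
        (fun y : ℝ => exp (-y/θ) ^ (k+1) - 2 * exp (-y/θ) ^ (k+2)) (Ioi 0) :=
      h1.sub (h2.const_mul 2)
    have hI : IntegrableOn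
        (fun y : ℝ => (exp (-y/θ) ^ (k+1) - 2 * exp (-y/θ) ^ (k+2) + exp (-y/θ) ^ (k+3))
          / ((k:ℝ)+1)) (Ioi 0) := (hA.add h3).div_const _
    exact hI.congr_fun (fun y _ => by ring) measurableSet_Ioi
  · intro k y hy
    have h1 := (u_lt_one hθ hy).le
    have h2 := (u_pos θ y).le
    have h3 : (0:ℝ) < (k:ℝ)+1 := by positivity
    have : 0 ≤ 1 - exp (-y/θ) := by linarith
    positivity
  · intro k
    have h1 := integrableOn_exp_pow hθ (k+1) (Nat.succ_pos k)
    have h2 := integrableOn_exp_pow hθ (k+2) (by omega)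
    have h3 := integrableOn_exp_pow hθ (k+3) (by omega)
    have heq : ∀ y ∈ Ioi (0:ℝ),
        (1 - exp (-y/θ))^2 * (exp (-y/θ) ^ (k+1) / ((k:ℝ)+1))
          = (exp (-y/θ) ^ (k+1) - 2 * exp (-y/θ) ^ (k+2) + exp (-y/θ) ^ (k+3)) / ((k:ℝ)+1) :=
      fun y _ => by ring
    rw [setIntegral_congr_fun measurableSet_Ioi heq]
    have hA : IntegrableOn
        (fun y : ℝ => exp (-y/θ) ^ (k+1) - 2 * exp (-y/θ) ^ (k+2)) (Ioi 0) :=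
      h1.sub (h2.const_mul 2)
    have hB : IntegrableOn (fun y : ℝ => 2 * exp (-y/θ) ^ (k+2)) (Ioi 0) := h2.const_mul 2
    rw [integral_div, integral_add hA h3,
      integral_sub h1 hB, integral_const_mul,
      integral_exp_pow hθ (k+1) (Nat.succ_pos k),
      integral_exp_pow hθ (k+2) (by omega), integral_exp_pow hθ (k+3) (by omega)]
    have hk1 : ((k:ℝ)+1) ≠ 0 := by positivity
    have hk2 : ((k:ℝ)+2) ≠ 0 := by positivity
    have hk3 : ((k:ℝ)+3) ≠ 0 := by positivity
    push_cast
    field_simp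
  · intro y hy
    have hu1 : |exp (-y/θ)| < 1 := by
      rw [abs_of_pos (u_pos θ y)]; exact u_lt_one hθ hy
    have h := (hasSum_pow_div_log_of_abs_lt_one hu1).mul_left ((1 - exp (-y/θ))^2)
    convert h using 1
    · rfl
    ring
  · apply Measurable.aestronglyMeasurable
    have hu : Measurable fun y : ℝ => 1 - exp (-y/θ) :=
      measurable_const.sub ((measurable_id.neg.div_const θ).exp)
    exact ((hu.pow_const 2).mul (Real.measurable_log.comp hu)).neg
  · exact ((S0.mul_left θ).sub (S1.mul_left (2*θ))).add (S2.mul_left θ)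

end Key
end Stmt15Aux

open Stmt15Aux in
/-- For the exponential distribution with mean θ₂,
`I(F_{Y[r:n]}, F_Y) = (π²/6 − 1)θ₂ + (αθ₂/4)(n−2r+1)/(n+1)`; in particular
`CE(Y) = (π²/6 − 1)θ₂` and `−∫₀^∞ F² log F = (π²/6 − 5/4)θ₂`. -/
theorem stmt_15 (θ₂ α : ℝ) (hθ : 0 < θ₂) (hα : |α| ≤ 1)
    (n r : ℕ) (hr1 : 1 ≤ r) (hrn : r ≤ n)
    (F : ℝ → ℝ) (hF : ∀ y, F y = 1 - exp (-y / θ₂))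
    (G : ℝ → ℝ)
    (hG : ∀ y, G y = F y * (1 + α * (((n : ℝ) - 2 * r + 1) / ((n : ℝ) + 1)) * (1 - F y))) :
    (-∫ y in Ioi (0:ℝ), G y * log (F y)
        = (π ^ 2 / 6 - 1) * θ₂
          + (α * θ₂ / 4) * (((n : ℝ) - 2 * r + 1) / ((n : ℝ) + 1)))
    ∧ (-∫ y in Ioi (0:ℝ), F y * log (F y) = (π ^ 2 / 6 - 1) * θ₂)
    ∧ (-∫ y in Ioi (0:ℝ), (F y) ^ 2 * log (F y) = (π ^ 2 / 6 - 5 / 4) * θ₂) := by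
  have k1 := key1 hθ
  have k2 := key2 hθ
  have hI1 : ∫ y in Ioi (0:ℝ), (1 - exp (-y/θ₂)) * log (1 - exp (-y/θ₂))
      = -((π^2/6 - 1) * θ₂) := by
    have h := k1.2
    rw [integral_neg] at h
    linarith
  have hI2 : ∫ y in Ioi (0:ℝ), (1 - exp (-y/θ₂))^2 * log (1 - exp (-y/θ₂))
      = -((π^2/6 - 5/4) * θ₂) := by
    have h := k2.2
    rw [integral_neg] at h
    linarith
  have i1 : IntegrableOn (fun y : ℝ => (1 - exp (-y/θ₂)) * log (1 - exp (-y/θ₂))) (Ioi 0) := by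
    have hn : IntegrableOn
        (fun y : ℝ => -(-((1 - exp (-y/θ₂)) * log (1 - exp (-y/θ₂))))) (Ioi 0) := k1.1.neg
    exact hn.congr_fun (fun y _ => by ring) measurableSet_Ioi
  have i2 : IntegrableOn (fun y : ℝ => (1 - exp (-y/θ₂))^2 * log (1 - exp (-y/θ₂))) (Ioi 0) := by
    have hn : IntegrableOn
        (fun y : ℝ => -(-((1 - exp (-y/θ₂))^2 * log (1 - exp (-y/θ₂))))) (Ioi 0) := k2.1.neg
    exact hn.congr_fun (fun y _ => by ring) measurableSet_Ioi
  simp only [hF]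
  set c : ℝ := α * (((n : ℝ) - 2 * r + 1) / ((n : ℝ) + 1)) with hc
  refine ⟨?_, by rw [hI1]; ring, by rw [hI2]; ring⟩
  have hGeq : ∀ y ∈ Ioi (0:ℝ), G y * log (1 - exp (-y/θ₂))
      = (1+c) * ((1 - exp (-y/θ₂)) * log (1 - exp (-y/θ₂)))
        - c * ((1 - exp (-y/θ₂))^2 * log (1 - exp (-y/θ₂))) := by
    intro y _
    rw [hG y, hF y]
    ring
  rw [setIntegral_congr_fun measurableSet_Ioi hGeq,
    integral_sub (i1.const_mul _) (i2.const_mul _),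
    integral_const_mul, integral_const_mul, hI1, hI2, hc]
  ring
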